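/- Let f, g be increasing homeomorphisms of [0,1] fixing the endpoints, with push-up orbitals (a,b) of f and (c,d) of g. Let [x,y] ⊆ (a,b) be a compact subinterval. Then there exists an increasing homeomorphism σ of [0,1] fixing the endpoints such that [x,y] ⊆ (σ(c), σ(d)) and σ ∘ g ∘ σ⁻¹ agrees with f on [x,y]. -/

import Mathlib

open Set

/-- A strictly monotone surjection from `[u,v]` onto `[u',v']` with prescribed endpoints. -/
structure Nice (σ : ℝ → ℝ) (u v u' v' : ℝ) : Prop where
  hle : u ≤ v
  hle' : u' ≤ v'
  mono : StrictMonoOn σ (Set.Icc u v)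
  mapu : σ u = u'
  mapv : σ v = v'
  surj : Set.SurjOn σ (Set.Icc u v) (Set.Icc u' v')

namespace Nice

variable {σ σ₁ σ₂ : ℝ → ℝ} {u v w u' v' w' u'' v'' : ℝ}

theorem mapsTo (h : Nice σ u v u' v') : Set.MapsTo σ (Set.Icc u v) (Set.Icc u' v') := by
  intro t ht
  constructor
  · rw [← h.mapu]; exact h.mono.monotoneOn (left_mem_Icc.2 h.hle) ht ht.1
  · rw [← h.mapv]; exact h.mono.monotoneOn ht (right_mem_Icc.2 h.hle) ht.2

theorem comp (h1 : Nice σ₁ u v u' v') (h2 : Nice σ₂ u' v' u'' v'') :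
    Nice (fun t => σ₂ (σ₁ t)) u v u'' v'' := by
  refine ⟨h1.hle, h2.hle', ?_, by rw [h1.mapu, h2.mapu], by rw [h1.mapv, h2.mapv], ?_⟩
  · intro s hs t ht hst
    exact h2.mono (h1.mapsTo hs) (h1.mapsTo ht) (h1.mono hs ht hst)
  · intro z hz
    obtain ⟨s, hs, hσs⟩ := h2.surj hz
    obtain ⟨s', hs', hσs'⟩ := h1.surj hs
    exact ⟨s', hs', by simp only [hσs', hσs]⟩

theorem restrictLeft (h : Nice σ u v u' v') {m : ℝ} (hm : m ∈ Set.Icc u v) :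
    Nice σ m v (σ m) v' := by
  refine ⟨hm.2, by rw [← h.mapv]; exact h.mono.monotoneOn hm (right_mem_Icc.2 h.hle) hm.2,
    h.mono.mono (Icc_subset_Icc hm.1 le_rfl), rfl, h.mapv, ?_⟩
  intro z hz
  obtain ⟨s, hs, hσs⟩ := h.surj ⟨(h.mapu ▸ h.mono.monotoneOn (left_mem_Icc.2 h.hle) hm hm.1 :
    u' ≤ σ m).trans hz.1, hz.2⟩
  have hms : m ≤ s := by
    by_contra hc
    push_neg at hc
    have := h.mono hs hm hc
    rw [hσs] at this
    exact absurd hz.1 (not_le.2 this)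
  exact ⟨s, ⟨hms, hs.2⟩, hσs⟩

theorem continuousOn (h : Nice σ u v u' v') : ContinuousOn σ (Set.Icc u v) := by
  intro t ht
  have hsub : Set.Icc u v ⊆ (Set.Icc u v ∩ Set.Ici t) ∪ (Set.Icc u v ∩ Set.Iic t) := by
    intro s hs
    rcases le_total t s with hh | hh
    · exact Or.inl ⟨hs, hh⟩
    · exact Or.inr ⟨hs, hh⟩
  have hR : ContinuousWithinAt σ (Set.Icc u v ∩ Set.Ici t) t := by
    rcases eq_or_lt_of_le ht.2 with h1 | h1
    · refine continuousWithinAt_singleton.mono ?_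
      rintro s ⟨hs1, hs2⟩
      exact le_antisymm (h1 ▸ hs1.2) hs2
    · refine (h.mono.continuousWithinAt_right_of_exists_between
        (Icc_mem_nhdsGE_of_mem ⟨ht.1, h1⟩) ?_).mono inter_subset_right
      intro b hb
      have h2 : σ t < σ v := h.mono ht (right_mem_Icc.2 h.hle) h1
      have h3 : u' ≤ σ t := h.mapu ▸ h.mono.monotoneOn (left_mem_Icc.2 h.hle) ht ht.1
      obtain ⟨s, hs, hσs⟩ := h.surj (show min b (σ v) ∈ Set.Icc u' v' from
        ⟨h3.trans (le_min hb.le (h.mapv ▸ h2.le)), h.mapv ▸ min_le_right _ _⟩)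
      exact ⟨s, hs, by rw [hσs]; exact ⟨lt_min hb (h.mapv ▸ h2), min_le_left _ _⟩⟩
  have hL : ContinuousWithinAt σ (Set.Icc u v ∩ Set.Iic t) t := by
    rcases eq_or_lt_of_le ht.1 with h1 | h1
    · refine continuousWithinAt_singleton.mono ?_
      rintro s ⟨hs1, hs2⟩
      exact le_antisymm hs2 (h1 ▸ hs1.1)
    · refine (h.mono.continuousWithinAt_left_of_exists_between
        (Icc_mem_nhdsLE_of_mem ⟨h1, ht.2⟩) ?_).mono inter_subset_right
      intro b hb
      have h2 : σ u < σ t := h.mono (left_mem_Icc.2 h.hle) ht h1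
      have h3 : σ t ≤ v' := h.mapv ▸ h.mono.monotoneOn ht (right_mem_Icc.2 h.hle) ht.2
      obtain ⟨s, hs, hσs⟩ := h.surj (show max b (σ u) ∈ Set.Icc u' v' from
        ⟨h.mapu ▸ le_max_right _ _, max_le (hb.le.trans h3) (h.mapu ▸ h2.le.trans h3)⟩)
      exact ⟨s, hs, by rw [hσs]; exact ⟨le_max_left _ _, max_lt hb (h.mapu ▸ h2)⟩⟩
  exact (hR.union hL).mono hsub

end Nice

theorem nice_glue {σ₁ σ₂ : ℝ → ℝ} {u v w u' v' w' : ℝ}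
    (h1 : Nice σ₁ u v u' v') (h2 : Nice σ₂ v w v' w') :
    ∃ σ₃ : ℝ → ℝ, Nice σ₃ u w u' w' ∧ (∀ t ∈ Set.Icc u v, σ₃ t = σ₁ t) ∧
      (∀ t ∈ Set.Icc v w, σ₃ t = σ₂ t) := by
  refine ⟨fun t => if t ≤ v then σ₁ t else σ₂ t, ⟨h1.hle.trans h2.hle, h1.hle'.trans h2.hle',
    ?_, ?_, ?_, ?_⟩, fun t ht => if_pos ht.2, fun t ht => ?_⟩
  · intro s hs t ht hst
    by_cases hsv : s ≤ v <;> by_cases htv : t ≤ v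
    · simp only [if_pos hsv, if_pos htv]
      exact h1.mono ⟨hs.1, hsv⟩ ⟨ht.1, htv⟩ hst
    · push_neg at htv
      simp only [if_pos hsv, if_neg (not_le.2 htv)]
      calc σ₁ s ≤ σ₁ v := h1.mono.monotoneOn ⟨hs.1, hsv⟩ (right_mem_Icc.2 h1.hle) hsv
        _ = v' := h1.mapv
        _ = σ₂ v := h2.mapu.symm
        _ < σ₂ t := h2.mono (left_mem_Icc.2 h2.hle) ⟨htv.le, ht.2⟩ htv
    · push_neg at hsv; exact absurd (hst.trans_le htv) (not_lt.2 hsv.le)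
    · push_neg at hsv htv
      simp only [if_neg (not_le.2 hsv), if_neg (not_le.2 htv)]
      exact h2.mono ⟨hsv.le, hs.2⟩ ⟨htv.le, ht.2⟩ hst
  · rw [if_pos h1.hle]; exact h1.mapu
  · rcases eq_or_lt_of_le h2.hle with hvw | hvw
    · subst hvw
      rw [if_pos le_rfl, h1.mapv, ← h2.mapu, h2.mapv]
    · rw [if_neg (not_le.2 hvw)]; exact h2.mapv
  · intro z hz
    by_cases hz' : z ≤ v'
    · obtain ⟨s, hs, hσs⟩ := h1.surj ⟨hz.1, hz'⟩
      refine ⟨s, ⟨hs.1, hs.2.trans h2.hle⟩, ?_⟩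
      show (if s ≤ v then σ₁ s else σ₂ s) = z
      rw [if_pos hs.2]; exact hσs
    · push_neg at hz'
      obtain ⟨s, hs, hσs⟩ := h2.surj ⟨hz'.le, hz.2⟩
      have hvs : v < s := by
        rcases eq_or_lt_of_le hs.1 with hh | hh
        · exfalso; rw [← hh, h2.mapu] at hσs; exact absurd hσs (ne_of_lt hz')
        · exact hh
      refine ⟨s, ⟨h1.hle.trans hs.1, hs.2⟩, ?_⟩
      show (if s ≤ v then σ₁ s else σ₂ s) = z
      rw [if_neg (not_le.2 hvs)]; exact hσs
  · show (if t ≤ v then σ₁ t else σ₂ t) = σ₂ t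
    rcases eq_or_lt_of_le ht.1 with hh | hh
    · rw [← hh, if_pos le_rfl, h1.mapv, ← h2.mapu]
    · rw [if_neg (not_le.2 hh)]

theorem nice_linear {u v u' v' : ℝ} (h : u < v) (h' : u' < v') :
    Nice (fun t => u' + (t - u) * ((v' - u') / (v - u))) u v u' v' := by
  have hvu : (0:ℝ) < v - u := by linarith
  have hk : (0:ℝ) < (v' - u') / (v - u) := div_pos (by linarith) hvu
  refine ⟨h.le, h'.le, ?_, by simp, by field_simp; ring, ?_⟩
  · intro s _ t _ hst
    have : (s - u) * ((v' - u') / (v - u)) < (t - u) * ((v' - u') / (v - u)) := by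
      apply mul_lt_mul_of_pos_right (by linarith) hk
    linarith
  · intro z hz
    obtain ⟨hz1, hz2⟩ := hz
    have hne : v' - u' ≠ 0 := sub_ne_zero.2 h'.ne'
    have hk' : (0:ℝ) < (v - u) / (v' - u') := div_pos hvu (by linarith)
    refine ⟨u + (z - u') * ((v - u) / (v' - u')), ⟨?_, ?_⟩, ?_⟩
    · nlinarith [mul_nonneg (show (0:ℝ) ≤ z - u' by linarith) hk'.le]
    · have h1 : (z - u') * ((v - u) / (v' - u')) ≤ (v' - u') * ((v - u) / (v' - u')) :=
        mul_le_mul_of_nonneg_right (by linarith) hk'.le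
      have h2 : (v' - u') * ((v - u) / (v' - u')) = v - u := by
        rw [mul_comm, div_mul_eq_mul_div, mul_div_assoc, div_self hne, mul_one]
      linarith
    · have e0 : u + (z - u') * ((v - u) / (v' - u')) - u = (z - u') * ((v - u) / (v' - u')) := by
        ring
      have e1 : (v - u) / (v' - u') * ((v' - u') / (v - u)) = 1 := by
        field_simp
      show u' + (u + (z - u') * ((v - u) / (v' - u')) - u) * ((v' - u') / (v - u)) = z
      rw [e0, mul_assoc, e1, mul_one]
      ring

theorem nice_of_mono_cont {f : ℝ → ℝ} (hc : ContinuousOn f (Set.Icc 0 1))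
    (hm : StrictMonoOn f (Set.Icc 0 1)) {u v : ℝ} (hu : u ∈ Set.Icc 0 1) (hv : v ∈ Set.Icc 0 1)
    (huv : u ≤ v) : Nice f u v (f u) (f v) := by
  refine ⟨huv, hm.monotoneOn hu hv huv, hm.mono (Icc_subset_Icc hu.1 hv.2), rfl, rfl, ?_⟩
  exact intermediate_value_Icc huv (hc.mono (Icc_subset_Icc hu.1 hv.2))

theorem nice_inv {g τg : ℝ → ℝ} (hgm : StrictMonoOn g (Set.Icc 0 1))
    (hinv : Set.InvOn τg g (Set.Icc 0 1) (Set.Icc 0 1))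
    (hmt : Set.MapsTo τg (Set.Icc 0 1) (Set.Icc 0 1))
    (hgmt : Set.MapsTo g (Set.Icc 0 1) (Set.Icc 0 1))
    {u v : ℝ} (hu : u ∈ Set.Icc 0 1) (hv : v ∈ Set.Icc 0 1) (huv : u ≤ v) :
    Nice τg (g u) (g v) u v := by
  have hgu := hgmt hu
  have hgv := hgmt hv
  refine ⟨hgm.monotoneOn hu hv huv, huv, ?_, hinv.1 hu, hinv.1 hv, ?_⟩
  · intro s hs t ht hst
    have hs01 : s ∈ Set.Icc (0:ℝ) 1 := ⟨hgu.1.trans hs.1, hs.2.trans hgv.2⟩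
    have ht01 : t ∈ Set.Icc (0:ℝ) 1 := ⟨hgu.1.trans ht.1, ht.2.trans hgv.2⟩
    by_contra hc
    push_neg at hc
    have := hgm.monotoneOn (hmt ht01) (hmt hs01) hc
    rw [hinv.2 hs01, hinv.2 ht01] at this
    exact absurd hst (not_lt.2 this)
  · intro z hz
    have hz01 : z ∈ Set.Icc (0:ℝ) 1 := ⟨hu.1.trans hz.1, hz.2.trans hv.2⟩
    exact ⟨g z, ⟨hgm.monotoneOn hu hz01 hz.1, hgm.monotoneOn hz01 hv hz.2⟩, hinv.1 hz01⟩

/-- Given push-up orbitals `(a,b)` of `f` and `(c,d)` of `g` and a compact subinterval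
`[x,y] ⊆ (a,b)`, there is a homeomorphism `σ` of `[0,1]` (with inverse `τ` on `[0,1]`)
such that `[x,y] ⊆ (σ c, σ d)` and the conjugate `σ ∘ g ∘ σ⁻¹` agrees with `f` on
`[x,y]`. -/
theorem stmt18 (f g : ℝ → ℝ)
    (hfc : ContinuousOn f (Set.Icc 0 1)) (hfm : StrictMonoOn f (Set.Icc 0 1))
    (hfbij : Set.BijOn f (Set.Icc 0 1) (Set.Icc 0 1)) (hf0 : f 0 = 0) (hf1 : f 1 = 1)
    (hgc : ContinuousOn g (Set.Icc 0 1)) (hgm : StrictMonoOn g (Set.Icc 0 1))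
    (hgbij : Set.BijOn g (Set.Icc 0 1) (Set.Icc 0 1)) (hg0 : g 0 = 0) (hg1 : g 1 = 1)
    (a b c d : ℝ) (h0a : 0 ≤ a) (hab : a < b) (hb1 : b ≤ 1)
    (h0c : 0 ≤ c) (hcd : c < d) (hd1 : d ≤ 1)
    (hfa : f a = a) (hfb : f b = b) (hfpush : ∀ t ∈ Set.Ioo a b, t < f t)
    (hgc' : g c = c) (hgd : g d = d) (hgpush : ∀ t ∈ Set.Ioo c d, t < g t)
    (x y : ℝ) (hax : a < x) (hxy : x ≤ y) (hyb : y < b) :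
    ∃ σ τ : ℝ → ℝ,
      ContinuousOn σ (Set.Icc 0 1) ∧ StrictMonoOn σ (Set.Icc 0 1) ∧
      Set.BijOn σ (Set.Icc 0 1) (Set.Icc 0 1) ∧ σ 0 = 0 ∧ σ 1 = 1 ∧
      Set.InvOn τ σ (Set.Icc 0 1) (Set.Icc 0 1) ∧
      σ c < x ∧ y < σ d ∧
      ∀ t ∈ Set.Icc x y, σ (g (τ t)) = f t := by
  classical
  have hIab : Set.Ioo a b ⊆ Set.Icc 0 1 := fun t ht => ⟨h0a.trans ht.1.le, ht.2.le.trans hb1⟩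
  have hIcd : Set.Ioo c d ⊆ Set.Icc 0 1 := fun t ht => ⟨h0c.trans ht.1.le, ht.2.le.trans hd1⟩
  have hxab : x ∈ Set.Ioo a b := ⟨hax, hxy.trans_lt hyb⟩
  set p : ℝ := (c + d) / 2 with hpdef
  have hpcd : p ∈ Set.Ioo c d := ⟨by rw [hpdef]; linarith, by rw [hpdef]; linarith⟩
  have hp01 : p ∈ Set.Icc (0:ℝ) 1 := hIcd hpcd
  have hp0 : (0:ℝ) < p := lt_of_le_of_lt h0c hpcd.1
  have hx0 : (0:ℝ) < x := lt_of_le_of_lt h0a hax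
  set q : ℕ → ℝ := fun k => g^[k] p with hqdef
  set r : ℕ → ℝ := fun k => f^[k] x with hrdef
  have hq0 : q 0 = p := rfl
  have hr0 : r 0 = x := rfl
  have hqs : ∀ k, q (k+1) = g (q k) := fun k => Function.iterate_succ_apply' g k p
  have hrs : ∀ k, r (k+1) = f (r k) := fun k => Function.iterate_succ_apply' f k x
  have hgIoo : ∀ t ∈ Set.Ioo c d, g t ∈ Set.Ioo c d := by
    intro t ht
    refine ⟨ht.1.trans (hgpush t ht), ?_⟩
    have := hgm (hIcd ht) ⟨h0c.trans hcd.le, hd1⟩ ht.2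
    rwa [hgd] at this
  have hfIoo : ∀ t ∈ Set.Ioo a b, f t ∈ Set.Ioo a b := by
    intro t ht
    refine ⟨ht.1.trans (hfpush t ht), ?_⟩
    have := hfm (hIab ht) ⟨h0a.trans hab.le, hb1⟩ ht.2
    rwa [hfb] at this
  have hqm : ∀ k, q k ∈ Set.Ioo c d := by
    intro k
    induction k with
    | zero => exact hpcd
    | succ k ih => rw [hqs]; exact hgIoo _ ih
  have hrm : ∀ k, r k ∈ Set.Ioo a b := by
    intro k
    induction k with
    | zero => exact hxab
    | succ k ih => rw [hrs]; exact hfIoo _ ih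
  have hq01 : ∀ k, q k ∈ Set.Icc (0:ℝ) 1 := fun k => hIcd (hqm k)
  have hr01 : ∀ k, r k ∈ Set.Icc (0:ℝ) 1 := fun k => hIab (hrm k)
  have hqlt : ∀ k, q k < q (k+1) := fun k => by rw [hqs]; exact hgpush _ (hqm k)
  have hrlt : ∀ k, r k < r (k+1) := fun k => by rw [hrs]; exact hfpush _ (hrm k)
  have hqmono : StrictMono q := strictMono_nat_of_lt_succ hqlt
  have hrmono : StrictMono r := strictMono_nat_of_lt_succ hrlt
  have hpq : ∀ k, p ≤ q k := by
    intro k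
    have := hqmono.monotone (Nat.zero_le k)
    rwa [hq0] at this
  -- existence of n with y < r n
  obtain ⟨n, hn⟩ : ∃ n, y < r n := by
    by_contra hcon
    push_neg at hcon
    have hbdd : BddAbove (Set.range r) := ⟨y, by rintro _ ⟨k, rfl⟩; exact hcon k⟩
    have htend : Filter.Tendsto r Filter.atTop (nhds (⨆ k, r k)) :=
      tendsto_atTop_ciSup hrmono.monotone hbdd
    set L := ⨆ k, r k with hLdef
    have hxL : x ≤ L := by
      have := le_ciSup hbdd 0
      rwa [hr0] at this
    have hLy : L ≤ y := ciSup_le hcon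
    have hLab : L ∈ Set.Ioo a b := ⟨hax.trans_le hxL, hLy.trans_lt hyb⟩
    have h1 : Filter.Tendsto (fun k => r (k+1)) Filter.atTop (nhds L) :=
      htend.comp (Filter.tendsto_add_atTop_nat 1)
    have h2 : Filter.Tendsto (fun k => f (r k)) Filter.atTop (nhds (f L)) := by
      refine (hfc L (hIab hLab)).tendsto.comp ?_
      rw [tendsto_nhdsWithin_iff]
      exact ⟨htend, Filter.Eventually.of_forall fun k => hr01 k⟩
    have heq : (fun k => f (r k)) = fun k => r (k+1) := funext fun k => (hrs k).symm
    rw [heq] at h2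
    exact (hfpush L hLab).ne' (tendsto_nhds_unique h2 h1)
  -- inverse of g
  set τg : ℝ → ℝ := Function.invFunOn g (Set.Icc 0 1) with hτgdef
  have hτg : Set.InvOn τg g (Set.Icc 0 1) (Set.Icc 0 1) := hgbij.invOn_invFunOn
  have hτgmt : Set.MapsTo τg (Set.Icc 0 1) (Set.Icc 0 1) := hgbij.surjOn.mapsTo_invFunOn
  -- the middle (fundamental-domain) construction
  have hmid : ∀ m : ℕ, ∃ σ : ℝ → ℝ, Nice σ p (q (m+1)) x (r (m+1)) ∧
      (∀ s ∈ Set.Icc p (q m), σ (g s) = f (σ s)) ∧ (∀ k ≤ m + 1, σ (q k) = r k) := by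
    intro m
    induction m with
    | zero =>
      have hN := nice_linear (show p < q 1 by rw [hqs, hq0]; exact hgpush p hpcd)
        (show x < r 1 by rw [hrs, hr0]; exact hfpush x hxab)
      refine ⟨_, hN, ?_, ?_⟩
      · intro s hs
        rw [hq0] at hs
        have hsp : s = p := le_antisymm hs.2 hs.1
        subst hsp
        have e1 : g p = q 1 := by rw [hqs 0, hq0]
        rw [e1, hN.mapv, hN.mapu, hrs 0, hr0]
      · intro k hk
        match k, hk with
        | 0, _ => rw [hq0, hr0]; exact hN.mapu
        | 1, _ => exact hN.mapv
    | succ m ih =>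
      obtain ⟨σn, hσn, hequi, hval⟩ := ih
      have hg_qn : g (q m) = q (m+1) := (hqs m).symm
      have hg_Q1 : g (q (m+1)) = q (m+2) := (hqs (m+1)).symm
      have hτnice : Nice τg (q (m+1)) (q (m+2)) (q m) (q (m+1)) := by
        have := nice_inv hgm hτg hτgmt hgbij.mapsTo (hq01 m) (hq01 (m+1))
          (hqmono.monotone (Nat.le_succ m))
        rwa [hg_qn, hg_Q1] at this
      have hσn' : Nice σn (q m) (q (m+1)) (r m) (r (m+1)) := by
        have := hσn.restrictLeft (show q m ∈ Set.Icc p (q (m+1)) from ⟨hpq m, (hqlt m).le⟩)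
        rwa [hval m (Nat.le_succ m)] at this
      have hfnice : Nice f (r m) (r (m+1)) (r (m+1)) (r (m+2)) := by
        have := nice_of_mono_cont hfc hfm (hr01 m) (hr01 (m+1)) (hrlt m).le
        rwa [← hrs m, ← hrs (m+1)] at this
      have hσ2 : Nice (fun t => f (σn (τg t))) (q (m+1)) (q (m+2)) (r (m+1)) (r (m+2)) :=
        (hτnice.comp hσn').comp hfnice
      obtain ⟨σ', hσ', hag1, hag2⟩ := nice_glue hσn hσ2
      refine ⟨σ', hσ', ?_, ?_⟩
      · intro s hs
        have hs01 : s ∈ Set.Icc (0:ℝ) 1 := ⟨hp0.le.trans hs.1, hs.2.trans (hq01 (m+1)).2⟩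
        by_cases hsn : s ≤ q m
        · have hgs : g s ∈ Set.Icc p (q (m+1)) := by
            constructor
            · exact (hgpush p hpcd).le.trans (hgm.monotoneOn hp01 hs01 hs.1)
            · have := hgm.monotoneOn hs01 (hq01 m) hsn
              rwa [hg_qn] at this
          rw [hag1 _ hgs, hag1 _ hs, hequi s ⟨hs.1, hsn⟩]
        · push_neg at hsn
          have hgs1 : q (m+1) ≤ g s := by
            have := hgm.monotoneOn (hq01 m) hs01 hsn.le
            rwa [hg_qn] at this
          have hgs2 : g s ≤ q (m+2) := by
            have := hgm.monotoneOn hs01 (hq01 (m+1)) hs.2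
            rwa [hg_Q1] at this
          rw [hag2 _ ⟨hgs1, hgs2⟩, hag1 _ hs]
          show f (σn (τg (g s))) = f (σn s)
          rw [hτg.1 hs01]
      · intro k hk
        rcases Nat.lt_or_ge k (m+2) with hk' | hk'
        · have hk2 : k ≤ m+1 := Nat.lt_succ_iff.mp hk'
          have hmem : q k ∈ Set.Icc p (q (m+1)) := ⟨hpq k, hqmono.monotone hk2⟩
          rw [hag1 _ hmem, hval k hk2]
        · have hkeq : k = m+2 := le_antisymm hk hk'
          subst hkeq
          exact hσ'.mapv
  obtain ⟨σm, hσm, hequi, hval⟩ := hmid n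
  have hQ : q (n+1) < 1 := lt_of_lt_of_le (hqm (n+1)).2 hd1
  have hR : r (n+1) < 1 := lt_of_lt_of_le (hrm (n+1)).2 hb1
  have hℓ1 := nice_linear hp0 hx0
  obtain ⟨σi, hσi, hi1, hi2⟩ := nice_glue hℓ1 hσm
  have hℓ2 := nice_linear hQ hR
  obtain ⟨σ, hσ, ho1, ho2⟩ := nice_glue hσi hℓ2
  have hbij : Set.BijOn σ (Set.Icc 0 1) (Set.Icc 0 1) := ⟨hσ.mapsTo, hσ.mono.injOn, hσ.surj⟩
  set τ : ℝ → ℝ := Function.invFunOn σ (Set.Icc 0 1) with hτdef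
  have hinv : Set.InvOn τ σ (Set.Icc 0 1) (Set.Icc 0 1) := hbij.invOn_invFunOn
  have hτmt : Set.MapsTo τ (Set.Icc 0 1) (Set.Icc 0 1) := hbij.surjOn.mapsTo_invFunOn
  refine ⟨σ, τ, hσ.continuousOn, hσ.mono, hbij, hσ.mapu, hσ.mapv, hinv, ?_, ?_, ?_⟩
  · -- σ c < x
    have hcmem : c ∈ Set.Icc (0:ℝ) (q (n+1)) := ⟨h0c, hpcd.1.le.trans hσm.hle⟩
    rw [ho1 _ hcmem, hi1 _ ⟨h0c, hpcd.1.le⟩]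
    have hxp : 0 < x / p := div_pos hx0 hp0
    have h1 : c * (x / p) < p * (x / p) := mul_lt_mul_of_pos_right hpcd.1 hxp
    have h2 : p * (x / p) = x := by field_simp
    show 0 + (c - 0) * ((x - 0) / (p - 0)) < x
    rw [sub_zero, sub_zero, sub_zero, zero_add]
    linarith
  · -- y < σ d
    rw [ho2 _ ⟨(hqm (n+1)).2.le, hd1⟩]
    show y < r (n+1) + (d - q (n+1)) * ((1 - r (n+1)) / (1 - q (n+1)))
    have h1 : 0 < d - q (n+1) := sub_pos.2 (hqm (n+1)).2
    have h2 : 0 < (1 - r (n+1)) / (1 - q (n+1)) := div_pos (by linarith) (by linarith)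
    have h3 := mul_pos h1 h2
    have h4 : y < r (n+1) := hn.trans (hrlt n)
    linarith
  · -- the conjugation identity
    intro t ht
    have ht01 : t ∈ Set.Icc (0:ℝ) 1 := ⟨hx0.le.trans ht.1, ht.2.trans (hyb.le.trans hb1)⟩
    have hτt01 : τ t ∈ Set.Icc (0:ℝ) 1 := hτmt ht01
    have hστ : σ (τ t) = t := hinv.2 ht01
    have hpmem : p ∈ Set.Icc (0:ℝ) (q (n+1)) := ⟨hp0.le, hσm.hle⟩
    have hσp : σ p = x := by
      rw [ho1 _ hpmem, hi2 _ ⟨le_rfl, hσm.hle⟩, hσm.mapu]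
    have hqn0Q : q n ∈ Set.Icc (0:ℝ) (q (n+1)) := ⟨(hq01 n).1, (hqlt n).le⟩
    have hqnpQ : q n ∈ Set.Icc p (q (n+1)) := ⟨hpq n, (hqlt n).le⟩
    have hσqn : σ (q n) = r n := by
      rw [ho1 _ hqn0Q, hi2 _ hqnpQ, hval n (Nat.le_succ n)]
    have hpτ : p ≤ τ t := by
      by_contra hc
      push_neg at hc
      have := hσ.mono hτt01 hp01 hc
      rw [hστ, hσp] at this
      exact absurd ht.1 (not_le.2 this)
    have hτqn : τ t ≤ q n := by
      by_contra hc
      push_neg at hc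
      have := hσ.mono (hq01 n) hτt01 hc
      rw [hστ, hσqn] at this
      exact absurd (ht.2.trans_lt hn) (not_lt.2 this.le)
    have hgτ : g (τ t) ∈ Set.Icc p (q (n+1)) := by
      constructor
      · exact (hgpush p hpcd).le.trans (hgm.monotoneOn hp01 hτt01 hpτ)
      · have := hgm.monotoneOn hτt01 (hq01 n) hτqn
        rwa [← hqs n] at this
    have h01gτ : g (τ t) ∈ Set.Icc (0:ℝ) (q (n+1)) := ⟨hp0.le.trans hgτ.1, hgτ.2⟩
    rw [ho1 _ h01gτ, hi2 _ hgτ, hequi (τ t) ⟨hpτ, hτqn⟩]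
    have hag : σ (τ t) = σm (τ t) := by
      rw [ho1 _ ⟨hτt01.1, hτqn.trans (hqlt n).le⟩, hi2 _ ⟨hpτ, hτqn.trans (hqlt n).le⟩]
    rw [← hag, hστ]
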